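/- Let C = ((i_1, j_1), …, (i_M, j_M)) be a comparator network on K wires (each i_m ≠ j_m are indices in {1, …, K}). Let y⁰, y¹, …, y^M be vectors in {0, 1, ⊥}^K such that for each step m, y^m agrees with y^{m−1} on all wires other than i_m and j_m, the value y^m_{i_m} satisfies the robust AND constraint with inputs (y^{m−1}_{i_m}, y^{m−1}_{j_m}), and the value y^m_{j_m} satisfies the robust OR constraint with the same inputs. Let f : {0, 1, ⊥} → ℝ map 0 ↦ 0, ⊥ ↦ 1/2, 1 ↦ 1, and let z⁰ = f ∘ y⁰, z¹, …, z^M be the ideal execution of the network on z⁰, i.e., at step m the pair (z_{i_m}, z_{j_m}) is replaced by (min(z_{i_m}, z_{j_m}), max(z_{i_m}, z_{j_m})). Then for every m ∈ {0, …, M} and every wire i: if z^m_i = 0 then y^m_i = 0, and if z^m_i = 1 then y^m_i = 1. In particular, if the final ideal vector z^M is nondecreasing, and K₀ (resp. K₁) denotes the number of wires i with y⁰_i = 0 (resp. y⁰_i = 1), then y^M_i = 0 for the first K₀ wires and y^M_i = 1 for the last K₁ wires. -/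
import Mathlib


/-- Values of Pure-Circuit nodes: 0, 1, or the garbage value ⊥. -/
inductive PCVal : Type
  | zero
  | one
  | bot
deriving DecidableEq

/-- The robust AND constraint on inputs `a, b` and output `c`. -/
def andOk (a b c : PCVal) : Prop :=
  (a = .one ∧ b = .one → c = .one) ∧ ((a = .zero ∨ b = .zero) → c = .zero)

/-- The robust OR constraint on inputs `a, b` and output `c`. -/
def orOk (a b c : PCVal) : Prop :=
  (a = .zero ∧ b = .zero → c = .zero) ∧ ((a = .one ∨ b = .one) → c = .one)

/-- The map `0 ↦ 0, ⊥ ↦ 1/2, 1 ↦ 1`. -/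
noncomputable def fval : PCVal → ℝ
  | .zero => 0
  | .bot => 1 / 2
  | .one => 1

/-- Weak sorting by a comparator network implemented with robust AND/OR gates:
the Pure-Circuit execution `y` agrees with the ideal execution `z` on all
pure values, and hence (if the ideal output is sorted) the first `K₀` outputs
are 0 and the last `K₁` outputs are 1. -/
theorem sorting_network_weak_sort {K M : ℕ}
    (net : Fin M → Fin K × Fin K)
    (hnet : ∀ m, (net m).1 ≠ (net m).2)
    (y : Fin (M + 1) → Fin K → PCVal)
    (hyframe : ∀ (m : Fin M) (i : Fin K), i ≠ (net m).1 → i ≠ (net m).2 →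
      y m.succ i = y m.castSucc i)
    (hyand : ∀ m : Fin M,
      andOk (y m.castSucc (net m).1) (y m.castSucc (net m).2) (y m.succ (net m).1))
    (hyor : ∀ m : Fin M,
      orOk (y m.castSucc (net m).1) (y m.castSucc (net m).2) (y m.succ (net m).2))
    (z : Fin (M + 1) → Fin K → ℝ)
    (hz0 : ∀ i, z 0 i = fval (y 0 i))
    (hzframe : ∀ (m : Fin M) (i : Fin K), i ≠ (net m).1 → i ≠ (net m).2 →
      z m.succ i = z m.castSucc i)
    (hzmin : ∀ m : Fin M,
      z m.succ (net m).1 = min (z m.castSucc (net m).1) (z m.castSucc (net m).2))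
    (hzmax : ∀ m : Fin M,
      z m.succ (net m).2 = max (z m.castSucc (net m).1) (z m.castSucc (net m).2)) :
    (∀ (m : Fin (M + 1)) (i : Fin K),
      (z m i = 0 → y m i = PCVal.zero) ∧ (z m i = 1 → y m i = PCVal.one)) ∧
    (Monotone (z (Fin.last M)) →
      ∀ i : Fin K,
        ((i : ℕ) < (Finset.univ.filter (fun j => y 0 j = PCVal.zero)).card →
          y (Fin.last M) i = PCVal.zero) ∧
        (K - (Finset.univ.filter (fun j => y 0 j = PCVal.one)).card ≤ (i : ℕ) →
          y (Fin.last M) i = PCVal.one)) := by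
  classical
  -- Main invariant, including that ideal values stay in {0, 1/2, 1}.
  have inv : ∀ (m : Fin (M + 1)) (i : Fin K),
      (z m i = 0 → y m i = PCVal.zero) ∧ (z m i = 1 → y m i = PCVal.one) ∧
      (z m i = 0 ∨ z m i = 1/2 ∨ z m i = 1) := by
    intro m
    induction m using Fin.induction with
    | zero =>
      intro i
      rw [hz0]
      cases y 0 i <;> simp [fval] <;> norm_num
    | succ m ih =>
      intro i
      obtain ⟨ha0, ha1, hav⟩ := ih (net m).1
      obtain ⟨hb0, hb1, hbv⟩ := ih (net m).2
      by_cases h1 : i = (net m).1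
      · subst h1
        have hand := hyand m
        rw [hzmin m]
        rcases hav with h | h | h <;> rcases hbv with h' | h' | h' <;>
          rw [h, h'] <;>
          refine ⟨fun hz => ?_, fun hz => ?_, by norm_num [min_def]⟩ <;>
          first
            | exact hand.2 (Or.inl (ha0 h))
            | exact hand.2 (Or.inr (hb0 h'))
            | exact hand.1 ⟨ha1 h, hb1 h'⟩
            | norm_num [min_def] at hz
      · by_cases h2 : i = (net m).2
        · subst h2
          have hor := hyor m
          rw [hzmax m]
          rcases hav with h | h | h <;> rcases hbv with h' | h' | h' <;>
            rw [h, h'] <;>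
            refine ⟨fun hz => ?_, fun hz => ?_, by norm_num [max_def]⟩ <;>
            first
              | exact hor.1 ⟨ha0 h, hb0 h'⟩
              | exact hor.2 (Or.inl (ha1 h))
              | exact hor.2 (Or.inr (hb1 h'))
              | norm_num [max_def] at hz
        · rw [hzframe m i h1 h2, hyframe m i h1 h2]
          exact ih i
  -- Each comparator step preserves, for each value c, the number of wires carrying c.
  have hstep : ∀ (m : Fin M) (c : ℝ),
      (Finset.univ.filter fun i => z m.succ i = c).card
        = (Finset.univ.filter fun i => z m.castSucc i = c).card := by
    intro m c
    set i1 := (net m).1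
    set j1 := (net m).2
    rcases le_total (z m.castSucc i1) (z m.castSucc j1) with h | h
    · have hfun : ∀ i, z m.succ i = z m.castSucc i := by
        intro i
        by_cases h1 : i = i1
        · subst h1; rw [hzmin m, min_eq_left h]
        · by_cases h2 : i = j1
          · subst h2; rw [hzmax m, max_eq_right h]
          · exact hzframe m i h1 h2
      simp only [hfun]
    · have hfun : ∀ i, z m.succ i = z m.castSucc ((Equiv.swap i1 j1) i) := by
        intro i
        by_cases h1 : i = i1
        · subst h1
          rw [hzmin m, min_eq_right h, Equiv.swap_apply_left]
        · by_cases h2 : i = j1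
          · subst h2
            rw [hzmax m, max_eq_left h, Equiv.swap_apply_right]
          · rw [Equiv.swap_apply_of_ne_of_ne h1 h2]
            exact hzframe m i h1 h2
      simp only [hfun]
      rw [← Fintype.card_subtype, ← Fintype.card_subtype]
      exact Fintype.card_congr (Equiv.subtypeEquiv (Equiv.swap i1 j1) (fun a => Iff.rfl))
  -- hence counts are preserved through the whole execution
  have hcount : ∀ (m : Fin (M + 1)) (c : ℝ),
      (Finset.univ.filter fun i => z m i = c).card
        = (Finset.univ.filter fun i => z 0 i = c).card := by
    intro m
    induction m using Fin.induction with
    | zero => intro c; rfl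
    | succ m ih => intro c; rw [hstep m c]; exact ih c
  have hz0zero : (Finset.univ.filter fun i => z 0 i = (0:ℝ))
      = Finset.univ.filter (fun j => y 0 j = PCVal.zero) := by
    apply Finset.filter_congr
    intro i _
    rw [hz0]
    cases y 0 i <;> simp [fval] <;> norm_num
  have hz0one : (Finset.univ.filter fun i => z 0 i = (1:ℝ))
      = Finset.univ.filter (fun j => y 0 j = PCVal.one) := by
    apply Finset.filter_congr
    intro i _
    rw [hz0]
    cases y 0 i <;> simp [fval] <;> norm_num
  refine ⟨fun m i => ⟨(inv m i).1, (inv m i).2.1⟩, ?_⟩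
  intro hmono i
  have hrange : ∀ j, (0:ℝ) ≤ z (Fin.last M) j ∧ z (Fin.last M) j ≤ 1 := by
    intro j
    rcases (inv (Fin.last M) j).2.2 with h | h | h <;> rw [h] <;> norm_num
  constructor
  · intro hi
    apply (inv (Fin.last M) i).1
    by_contra hne
    have hsub : (Finset.univ.filter fun j => z (Fin.last M) j = (0:ℝ)) ⊆ Finset.Iio i := by
      intro j hj
      simp only [Finset.mem_filter] at hj
      rw [Finset.mem_Iio]
      by_contra hij
      push_neg at hij
      exact hne (le_antisymm (hj.2 ▸ hmono hij) (hrange i).1)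
    have hcard := Finset.card_le_card hsub
    rw [Fin.card_Iio, hcount (Fin.last M) 0, hz0zero] at hcard
    omega
  · intro hi
    apply (inv (Fin.last M) i).2.1
    by_contra hne
    have hsub : (Finset.univ.filter fun j => z (Fin.last M) j = (1:ℝ)) ⊆ Finset.Ioi i := by
      intro j hj
      simp only [Finset.mem_filter] at hj
      rw [Finset.mem_Ioi]
      by_contra hij
      push_neg at hij
      exact hne (le_antisymm (hrange i).2 (hj.2 ▸ hmono hij))
    have hcard := Finset.card_le_card hsub
    rw [Fin.card_Ioi, hcount (Fin.last M) 1, hz0one] at hcard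
    have hK1 : (Finset.univ.filter (fun j => y 0 j = PCVal.one)).card ≤ K := by
      simpa using Finset.card_filter_le Finset.univ (fun j => y 0 j = PCVal.one)
    have hiK : (i : ℕ) < K := i.isLt
    omega
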